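/- Let n be a positive integer, C ⊆ ℝⁿ a convex set, φ : ℝⁿ → ℝ a convex function, ψ : ℝⁿ → ℝ a differentiable function, x₀ ∈ C, σ₁ ≥ 0, and σ₂ > 0. Suppose x⁺ ∈ C minimizes x ↦ φ(x) + ψ(x) + σ₁‖x − x₀‖₁ + (σ₂/2)‖x − x₀‖² over C, where ‖·‖ is the Euclidean norm and ‖d‖₁ := Σᵢ|dᵢ|. Then φ(x₀) + ψ(x₀) ≥ φ(x⁺) + ψ(x⁺) + σ₁‖x⁺ − x₀‖₁ + σ₂‖x⁺ − x₀‖² + ( ψ(x₀) − ψ(x⁺) − ⟨∇ψ(x⁺), x₀ − x⁺⟩ ). -/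

import Mathlib

open scoped RealInnerProductSpace Topology
open Filter

/-- Double-proximal descent inequality with a differentiable part.
If `x⁺ ∈ C` minimizes `x ↦ φ(x) + ψ(x) + σ₁‖x − x₀‖₁ + (σ₂/2)‖x − x₀‖²` over a convex set
`C ∋ x₀`, with `φ` convex and `ψ` differentiable, then
`φ(x₀) + ψ(x₀) ≥ φ(x⁺) + ψ(x⁺) + σ₁‖x⁺−x₀‖₁ + σ₂‖x⁺−x₀‖²
  + (ψ(x₀) − ψ(x⁺) − ⟨∇ψ(x⁺), x₀ − x⁺⟩)`. -/
theorem double_proximal_descent_with_smooth_part (n : ℕ) (hn : 0 < n)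
    (C : Set (EuclideanSpace ℝ (Fin n))) (hC : Convex ℝ C)
    (φ ψ : EuclideanSpace ℝ (Fin n) → ℝ)
    (hφ : ConvexOn ℝ (Set.univ : Set (EuclideanSpace ℝ (Fin n))) φ)
    (hψ : Differentiable ℝ ψ)
    (x₀ : EuclideanSpace ℝ (Fin n)) (hx₀ : x₀ ∈ C)
    (σ₁ σ₂ : ℝ) (hσ₁ : 0 ≤ σ₁) (hσ₂ : 0 < σ₂)
    (xp : EuclideanSpace ℝ (Fin n)) (hxp : xp ∈ C)
    (hmin : ∀ x ∈ C,
      φ xp + ψ xp + σ₁ * (∑ i, |xp i - x₀ i|) + σ₂ / 2 * ‖xp - x₀‖ ^ 2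
        ≤ φ x + ψ x + σ₁ * (∑ i, |x i - x₀ i|) + σ₂ / 2 * ‖x - x₀‖ ^ 2) :
    φ x₀ + ψ x₀ ≥ φ xp + ψ xp + σ₁ * (∑ i, |xp i - x₀ i|) + σ₂ * ‖xp - x₀‖ ^ 2
      + (ψ x₀ - ψ xp - ⟪gradient ψ xp, x₀ - xp⟫) := by
  set d : EuclideanSpace ℝ (Fin n) := x₀ - xp with hd
  set S : ℝ := ∑ i, |xp i - x₀ i| with hS
  set Q : ℝ := ‖xp - x₀‖ ^ 2 with hQ
  -- the inner product equals the directional derivative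
  have hgrad : ⟪gradient ψ xp, d⟫ = fderiv ℝ ψ xp d := by
    rw [gradient, InnerProductSpace.toDual_symm_apply]
  set L : ℝ := fderiv ℝ ψ xp d with hL
  -- derivative of t ↦ ψ (xp + t • d) at 0
  have hline : HasDerivAt (fun t : ℝ => xp + t • d) d 0 := by
    have h1 : HasDerivAt (fun t : ℝ => t • d) ((1 : ℝ) • d) 0 :=
      (hasDerivAt_id (0 : ℝ)).smul_const d
    simpa using h1.const_add xp
  have hg : HasDerivAt (fun t : ℝ => ψ (xp + t • d)) L 0 := by
    have := ((hψ (xp + (0 : ℝ) • d)).hasFDerivAt).comp_hasDerivAt 0 hline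
    simp only [zero_smul, add_zero] at this
    exact this
  -- key pointwise inequality for small positive t
  have key : ∀ t : ℝ, t ∈ Set.Ioo (0 : ℝ) 1 →
      φ xp - φ x₀ + σ₁ * S + σ₂ / 2 * (2 - t) * Q ≤ (ψ (xp + t • d) - ψ xp) / t := by
    intro t ht
    obtain ⟨ht0, ht1⟩ := ht
    set xt : EuclideanSpace ℝ (Fin n) := xp + t • d with hxt
    have hcomb : xt = (1 - t) • xp + t • x₀ := by
      rw [hxt, hd]; module
    have hxtC : xt ∈ C := by
      rw [hcomb]
      exact hC hxp hx₀ (by linarith) ht0.le (by ring)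
    have hφt : φ xt ≤ (1 - t) * φ xp + t * φ x₀ := by
      rw [hcomb]
      simpa [smul_eq_mul] using
        hφ.2 (Set.mem_univ xp) (Set.mem_univ x₀) (by linarith : (0:ℝ) ≤ 1 - t) ht0.le
          (by ring : (1 - t) + t = 1)
    have hSt : (∑ i, |xt i - x₀ i|) = (1 - t) * S := by
      rw [hS, Finset.mul_sum]
      refine Finset.sum_congr rfl fun i _ => ?_
      have h1 : xt i - x₀ i = (1 - t) * (xp i - x₀ i) := by
        simp only [hxt, hd, PiLp.add_apply, PiLp.smul_apply, PiLp.sub_apply, smul_eq_mul]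
        ring
      rw [h1, abs_mul, abs_of_nonneg (by linarith : (0:ℝ) ≤ 1 - t)]
    have hQt : ‖xt - x₀‖ ^ 2 = (1 - t) ^ 2 * Q := by
      have h1 : xt - x₀ = (1 - t) • (xp - x₀) := by
        rw [hxt, hd]; module
      rw [hQ, h1, norm_smul]
      rw [Real.norm_eq_abs, abs_of_nonneg (by linarith : (0:ℝ) ≤ 1 - t)]
      ring
    have hm := hmin xt hxtC
    rw [hSt, hQt] at hm
    rw [le_div_iff₀ ht0]
    have hS0 : (0:ℝ) ≤ S := Finset.sum_nonneg fun i _ => abs_nonneg _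
    nlinarith [hm, hφt, mul_nonneg hσ₁ (mul_nonneg ht0.le hS0)]
  -- take the limit t → 0⁺
  have hne : (𝓝[>] (0 : ℝ)).NeBot := inferInstance
  have hLlim : Filter.Tendsto (fun t : ℝ => (ψ (xp + t • d) - ψ xp) / t) (𝓝[>] (0:ℝ)) (𝓝 L) := by
    have := hg.hasDerivWithinAt (s := Set.Ioi (0:ℝ))
    have h2 := (hasDerivAt_iff_tendsto_slope.mp hg).mono_left
      (nhdsWithin_mono _ (by intro x hx; exact ne_of_gt hx : Set.Ioi (0:ℝ) ⊆ {(0:ℝ)}ᶜ))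
    refine h2.congr fun t => ?_
    simp [slope_def_field, div_eq_inv_mul]
  have hRlim : Filter.Tendsto (fun t : ℝ => φ xp - φ x₀ + σ₁ * S + σ₂ / 2 * (2 - t) * Q)
      (𝓝[>] (0:ℝ)) (𝓝 (φ xp - φ x₀ + σ₁ * S + σ₂ * Q)) := by
    have hc : Filter.Tendsto (fun t : ℝ => φ xp - φ x₀ + σ₁ * S + σ₂ / 2 * (2 - t) * Q)
        (𝓝 (0:ℝ)) (𝓝 (φ xp - φ x₀ + σ₁ * S + σ₂ / 2 * (2 - 0) * Q)) := by
      have h2 : Filter.Tendsto (fun t : ℝ => (2:ℝ) - t) (𝓝 (0:ℝ)) (𝓝 ((2:ℝ) - 0)) :=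
        tendsto_const_nhds.sub tendsto_id
      exact (((h2.const_mul (σ₂ / 2)).mul_const Q).const_add (φ xp - φ x₀ + σ₁ * S)).congr
        (fun t => by ring)
    have : φ xp - φ x₀ + σ₁ * S + σ₂ / 2 * (2 - 0) * Q
        = φ xp - φ x₀ + σ₁ * S + σ₂ * Q := by ring
    rw [this] at hc
    exact hc.mono_left nhdsWithin_le_nhds
  have hev : ∀ᶠ t in 𝓝[>] (0:ℝ),
      φ xp - φ x₀ + σ₁ * S + σ₂ / 2 * (2 - t) * Q ≤ (ψ (xp + t • d) - ψ xp) / t := by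
    filter_upwards [Ioo_mem_nhdsGT_of_mem (Set.mem_Ico.mpr ⟨le_refl 0, zero_lt_one⟩)]
      with t ht using key t ht
  have hfin : φ xp - φ x₀ + σ₁ * S + σ₂ * Q ≤ L :=
    le_of_tendsto_of_tendsto hRlim hLlim hev
  rw [← hgrad] at hfin
  linarith
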